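/- The Lie algebra Φ' (brackets [e₁,e₄]=[e₂,e₃]=-e₁, [e₂,e₄]=-(1/2)e₂, [e₃,e₄]=-(1/2)e₃) has spectrum {0, 1/2, 1/2, 1}: for the Frobenius functional F=e₁*, the principal element is e₄ and the characteristic polynomial of ad(e₄) is x(x-1/2)²(x-1). -/

import Mathlib

open Polynomial

noncomputable section

/-- The bracket of Φ′ on `Fin 4 → ℂ`, basis `e₁,…,e₄` indexed `0,…,3`:
`[e₁,e₄]=[e₂,e₃]=-e₁`, `[e₂,e₄]=-(1/2)e₂`, `[e₃,e₄]=-(1/2)e₃`. -/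
def brPhi' (x y : Fin 4 → ℂ) : Fin 4 → ℂ :=
  ![ -(x 0 * y 3 - x 3 * y 0) - (x 1 * y 2 - x 2 * y 1),
     -(1/2) * (x 1 * y 3 - x 3 * y 1),
     -(1/2) * (x 2 * y 3 - x 3 * y 2),
     0 ]

/-- Φ′ has spectrum `{0, 1/2, 1/2, 1}`: for the Frobenius functional
`F = e₁*` the principal element is `e₄`, and the characteristic polynomial of
`ad e₄` is `x (x - 1/2)² (x - 1)`. -/
theorem phi'_spectrum :
    (∀ x : Fin 4 → ℂ, brPhi' (Pi.single 3 1) x 0 = x 0) ∧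
    ∃ M : Matrix (Fin 4) (Fin 4) ℂ,
      (∀ x : Fin 4 → ℂ, M.mulVec x = brPhi' (Pi.single 3 1) x) ∧
      M.charpoly = X * (X - C (1/2 : ℂ)) ^ 2 * (X - 1) := by
  refine ⟨?_, Matrix.diagonal ![1, 1/2, 1/2, 0], ?_, ?_⟩
  · intro x
    simp [brPhi', Pi.single_apply]
  · intro x
    funext i
    fin_cases i <;>
      simp [brPhi', Matrix.mulVec, dotProduct, Fin.sum_univ_four,
        Matrix.diagonal, Pi.single_apply] <;> ring
  · rw [Matrix.charpoly]
    have h : (Matrix.diagonal ![1, 1/2, 1/2, 0] : Matrix (Fin 4) (Fin 4) ℂ).charmatrix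
        = Matrix.diagonal (fun i => X - C ((![1, 1/2, 1/2, 0] : Fin 4 → ℂ) i)) := by
      ext i j
      by_cases h : i = j <;>
        simp [Matrix.charmatrix_apply, Matrix.diagonal, Matrix.one_apply, h]
    rw [h, Matrix.det_diagonal, Fin.prod_univ_four]
    have h2 : (![1, 1/2, 1/2, 0] : Fin 4 → ℂ) 2 = 1/2 := rfl
    have h3 : (![1, 1/2, 1/2, 0] : Fin 4 → ℂ) 3 = 0 := rfl
    norm_num [h2, h3]
    ring
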